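/- Let X be a lazy simple random walk on Z_n^d started at 0 (holding probability 1/2, otherwise stepping to a uniformly random neighbor), let f : ℕ → Z_n^d be any function, and let a = (⌊n/2⌋,...,⌊n/2⌋). Then for all t ≥ 1: P(X_1 ≠ f(1), ..., X_t ≠ f(t)) ≤ P(X_1 ≠ a, ..., X_t ≠ a). That is, among all moving targets, the stationary target at the antipodal point is hardest to hit. -/

import Mathlib

open scoped ENNReal

/-- Transition kernel of the lazy simple random walk on `ℤ_n^d`: with probability `1/2`
stay put, otherwise pick a uniform direction `(i, ±)` among the `2d` unit steps and move. -/
noncomputable def lazyP (n d : ℕ) (x y : Fin d → ZMod n) : ℝ≥0∞ :=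
  (if y = x then 1 / 2 else 0) +
    (∑ i : Fin d,
        ((if y = Function.update x i (x i + 1) then (1 : ℝ≥0∞) else 0) +
          (if y = Function.update x i (x i - 1) then (1 : ℝ≥0∞) else 0))) / (4 * d)

/-- `stayProb P b D t y` is the probability that the chain with kernel `P` started at `b`
satisfies `X_s ∈ D_s` for all `1 ≤ s ≤ t` and `X_t = y`. -/
noncomputable def stayProb {V : Type*} [Fintype V] [DecidableEq V]
    (P : V → V → ℝ≥0∞) (b : V) (D : ℕ → Finset V) : ℕ → V → ℝ≥0∞
  | 0 => fun y => if y = b then 1 else 0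
  | s + 1 => fun y => if y ∈ D (s + 1) then ∑ z, stayProb P b D s z * P z y else 0


namespace Stmt7
set_option linter.unusedSectionVars false
set_option linter.unusedTactic false
open Finset Function
variable {V : Type*} [Fintype V] [DecidableEq V] {n d : ℕ} [NeZero n]



/-- heat kernel: t-step transition probabilities -/
noncomputable def hk (P : V → V → ℝ≥0∞) : ℕ → V → V → ℝ≥0∞
  | 0 => fun x y => if y = x then 1 else 0
  | t + 1 => fun x y => ∑ z, hk P t x z * P z y

/-- first-hit probability of the moving target f at time r (0 at r = 0) -/
noncomputable def FH (P : V → V → ℝ≥0∞) (b : V) (f : ℕ → V) : ℕ → ℝ≥0∞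
  | 0 => 0
  | r + 1 => ∑ z, stayProb P b (fun s => {f s}ᶜ) r z * P z (f (r + 1))

lemma stay_step (P : V → V → ℝ≥0∞) (b : V) (f : ℕ → V) (t : ℕ) (y : V) :
    ∑ z, stayProb P b (fun s => {f s}ᶜ) t z * P z y =
      stayProb P b (fun s => {f s}ᶜ) (t + 1) y +
        FH P b f (t + 1) * (if y = f (t + 1) then 1 else 0) := by
  by_cases hy : y = f (t + 1)
  · subst hy
    simp [stayProb, FH]
  · simp [stayProb, FH, hy, Finset.mem_compl, Finset.mem_singleton]

lemma decomp (P : V → V → ℝ≥0∞) (b : V) (f : ℕ → V) :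
    ∀ t y, hk P t b y =
      stayProb P b (fun s => {f s}ᶜ) t y +
        ∑ r ∈ Finset.range t, FH P b f (r + 1) * hk P (t - 1 - r) (f (r + 1)) y := by
  intro t
  induction t with
  | zero => intro y; simp [hk, stayProb]
  | succ t ih =>
    intro y
    have h1 : hk P (t + 1) b y = ∑ z, hk P t b z * P z y := rfl
    rw [h1]
    have h2 : ∀ z, hk P t b z = stayProb P b (fun s => {f s}ᶜ) t z +
        ∑ r ∈ Finset.range t, FH P b f (r + 1) * hk P (t - 1 - r) (f (r + 1)) z := ih
    calc ∑ z, hk P t b z * P z y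
        = ∑ z, (stayProb P b (fun s => {f s}ᶜ) t z * P z y +
            ∑ r ∈ Finset.range t, FH P b f (r + 1) * (hk P (t - 1 - r) (f (r + 1)) z * P z y)) := by
          refine Finset.sum_congr rfl fun z _ => ?_
          rw [h2 z, add_mul, Finset.sum_mul]
          ring_nf
      _ = (∑ z, stayProb P b (fun s => {f s}ᶜ) t z * P z y) +
            ∑ r ∈ Finset.range t, FH P b f (r + 1) * hk P (t - r) (f (r + 1)) y := by
          rw [Finset.sum_add_distrib]
          congr 1
          rw [Finset.sum_comm]
          refine Finset.sum_congr rfl fun r hr => ?_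
          rw [← Finset.mul_sum]
          congr 1
          have hr' : r < t := Finset.mem_range.mp hr
          have : t - r = (t - 1 - r) + 1 := by omega
          rw [this]
          rfl
      _ = stayProb P b (fun s => {f s}ᶜ) (t + 1) y +
            ∑ r ∈ Finset.range (t + 1), FH P b f (r + 1) * hk P (t + 1 - 1 - r) (f (r + 1)) y := by
          rw [stay_step, Finset.sum_range_succ]
          have e0 : hk P (t + 1 - 1 - t) (f (t + 1)) y = (if y = f (t + 1) then 1 else 0) := by
            have : t + 1 - 1 - t = 0 := by omega
            rw [this]; try rfl
          have e1 : ∀ r ∈ Finset.range t, FH P b f (r + 1) * hk P (t + 1 - 1 - r) (f (r + 1)) y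
              = FH P b f (r + 1) * hk P (t - r) (f (r + 1)) y := by
            intro r hr
            rfl
          rw [Finset.sum_congr rfl e1, e0]
          ring

/-- total mass of the heat kernel is 1 for a stochastic kernel -/
lemma sum_hk (P : V → V → ℝ≥0∞) (hP : ∀ x, ∑ y, P x y = 1) (t : ℕ) (x : V) :
    ∑ y, hk P t x y = 1 := by
  induction t with
  | zero => simp [hk]
  | succ t ih =>
    have : ∑ y, hk P (t+1) x y = ∑ y, ∑ z, hk P t x z * P z y := rfl
    rw [this, Finset.sum_comm]
    calc ∑ z, ∑ y, hk P t x z * P z y = ∑ z, hk P t x z * ∑ y, P z y := by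
          refine Finset.sum_congr rfl fun z _ => (Finset.mul_sum _ _ _).symm
      _ = ∑ z, hk P t x z := by
          refine Finset.sum_congr rfl fun z _ => by rw [hP z, mul_one]
      _ = 1 := ih

lemma hk_le_one (P : V → V → ℝ≥0∞) (hP : ∀ x, ∑ y, P x y = 1) (t : ℕ) (x y : V) :
    hk P t x y ≤ 1 := by
  rw [← sum_hk P hP t x]
  exact Finset.single_le_sum (f := fun y => hk P t x y) (fun _ _ => zero_le) (Finset.mem_univ y)

/-- survival mass -/
noncomputable def S (P : V → V → ℝ≥0∞) (b : V) (f : ℕ → V) (t : ℕ) : ℝ≥0∞ :=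
  ∑ y, stayProb P b (fun s => {f s}ᶜ) t y

lemma S_zero (P : V → V → ℝ≥0∞) (b : V) (f : ℕ → V) : S P b f 0 = 1 := by
  simp [S, stayProb]

lemma S_succ (P : V → V → ℝ≥0∞) (hP : ∀ x, ∑ y, P x y = 1) (b : V) (f : ℕ → V) (t : ℕ) :
    S P b f t = S P b f (t + 1) + FH P b f (t + 1) := by
  have h1 : S P b f t = ∑ y, ∑ z, stayProb P b (fun s => {f s}ᶜ) t z * P z y := by
    rw [Finset.sum_comm]
    refine Finset.sum_congr rfl fun z _ => ?_
    rw [← Finset.mul_sum, hP z, mul_one]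
  rw [h1]
  calc ∑ y, ∑ z, stayProb P b (fun s => {f s}ᶜ) t z * P z y
      = ∑ y, (stayProb P b (fun s => {f s}ᶜ) (t + 1) y +
          FH P b f (t + 1) * (if y = f (t + 1) then 1 else 0)) := by
        exact Finset.sum_congr rfl fun y _ => stay_step P b f t y
    _ = S P b f (t + 1) + FH P b f (t + 1) := by
        rw [Finset.sum_add_distrib]
        congr 1
        rw [← Finset.mul_sum]
        simp

/-- survival + cumulative hitting = 1 -/
lemma S_split (P : V → V → ℝ≥0∞) (hP : ∀ x, ∑ y, P x y = 1) (b : V) (f : ℕ → V) (t : ℕ) :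
    S P b f t + ∑ r ∈ Finset.range t, FH P b f (r + 1) = 1 := by
  induction t with
  | zero => simp [S_zero]
  | succ t ih =>
    rw [Finset.sum_range_succ]
    rw [S_succ P hP b f t] at ih
    rw [← ih]
    ring



lemma update_shift_iff (x y : Fin d → ZMod n) (i : Fin d) (c : ZMod n) :
    y = Function.update x i (x i + c) ↔ x = Function.update y i (y i - c) := by
  constructor
  · rintro rfl
    funext j
    by_cases hj : j = i
    · subst hj; simp
    · simp [Function.update, hj]
  · rintro rfl
    funext j
    by_cases hj : j = i
    · subst hj; simp
    · simp [Function.update, hj]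

lemma lazyP_stochastic (hd : d ≠ 0) (x : Fin d → ZMod n) :
    ∑ y, lazyP n d x y = 1 := by
  unfold lazyP
  rw [Finset.sum_add_distrib]
  have h1 : ∑ y : Fin d → ZMod n, (if y = x then (1:ℝ≥0∞) / 2 else 0) = 1 / 2 := by
    simp
  have h2 : ∑ y : Fin d → ZMod n,
      (∑ i : Fin d,
        ((if y = Function.update x i (x i + 1) then (1 : ℝ≥0∞) else 0) +
          (if y = Function.update x i (x i - 1) then (1 : ℝ≥0∞) else 0))) / (4 * d)
      = (2 * d) / (4 * d) := by
    simp only [div_eq_mul_inv, ← Finset.sum_mul]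
    congr 1
    rw [Finset.sum_comm]
    have : ∀ i : Fin d, ∑ y : Fin d → ZMod n,
        ((if y = Function.update x i (x i + 1) then (1 : ℝ≥0∞) else 0) +
          (if y = Function.update x i (x i - 1) then (1 : ℝ≥0∞) else 0)) = 2 := by
      intro i
      rw [Finset.sum_add_distrib]
      simp
      norm_num
    rw [Finset.sum_congr rfl fun i _ => this i]
    simp [mul_comm]
  rw [h1, h2]
  have hd2 : (2 * d : ℝ≥0∞) ≠ 0 := by
    simp [hd]
  have hdt : (2 * d : ℝ≥0∞) ≠ ⊤ := by
    simp [ENNReal.mul_ne_top]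
  have : (4 * d : ℝ≥0∞) = (2 * d) * 2 := by ring
  rw [this]
  rw [show (2 * (d:ℝ≥0∞)) / (2 * d * 2) = (2 * d * 1) / (2 * d * 2) by rw [mul_one]]
  rw [ENNReal.mul_div_mul_left 1 2 hd2 hdt]
  rw [ENNReal.div_add_div_same]
  norm_num
  exact ENNReal.div_self (by norm_num) (by norm_num)

lemma lazyP_translate (x y c : Fin d → ZMod n) :
    lazyP n d (x + c) (y + c) = lazyP n d x y := by
  unfold lazyP
  have he : (y + c = x + c) ↔ (y = x) := by
    constructor
    · intro h; funext j; have := congrFun h j; simpa using this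
    · rintro rfl; rfl
  rw [if_congr he rfl rfl]
  congr 2
  refine Finset.sum_congr rfl fun i _ => ?_
  have hu : ∀ v : ZMod n, Function.update (x + c) i ((x + c) i + v) =
      Function.update x i (x i + v) + c := by
    intro v
    funext j
    by_cases hj : j = i
    · subst hj; simp [Function.update]; ring
    · simp [Function.update, hj]
  have h1 : (y + c = Function.update (x + c) i ((x + c) i + 1)) ↔
      (y = Function.update x i (x i + 1)) := by
    rw [hu 1]
    constructor
    · intro h; funext j; have := congrFun h j; simpa using this
    · rintro rfl; rfl
  have h2 : (y + c = Function.update (x + c) i ((x + c) i + (-1))) ↔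
      (y = Function.update x i (x i + (-1))) := by
    rw [hu (-1)]
    constructor
    · intro h; funext j; have := congrFun h j; simpa using this
    · rintro rfl; rfl
  rw [if_congr h1 rfl rfl]
  have e : ∀ w : Fin d → ZMod n, w i - 1 = w i + (-1) := fun w => by ring
  rw [e, e, if_congr h2 rfl rfl]

lemma conv_lazyP (g : (Fin d → ZMod n) → ℝ≥0∞) (y : Fin d → ZMod n) :
    ∑ z, g z * lazyP n d z y =
      g y / 2 + (∑ i, (g (Function.update y i (y i - 1)) + g (Function.update y i (y i + 1)))) / (4 * d) := by
  unfold lazyP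
  have expand : ∀ z, g z * ((if y = z then (1:ℝ≥0∞) / 2 else 0) +
      (∑ i : Fin d,
        ((if y = Function.update z i (z i + 1) then (1 : ℝ≥0∞) else 0) +
          (if y = Function.update z i (z i - 1) then (1 : ℝ≥0∞) else 0))) / (4 * d)) =
      (if z = y then g z / 2 else 0) +
      (∑ i : Fin d,
        ((if z = Function.update y i (y i - 1) then g z else 0) +
          (if z = Function.update y i (y i + 1) then g z else 0))) / (4 * d) := by
    intro z
    rw [mul_add]
    congr 1
    · by_cases h : y = z
      · subst h; simp [div_eq_mul_inv, mul_comm]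
      · rw [if_neg h, if_neg (fun hz => h hz.symm), mul_zero]
    · rw [div_eq_mul_inv, div_eq_mul_inv, ← mul_assoc]
      congr 1
      rw [Finset.mul_sum]
      refine Finset.sum_congr rfl fun i _ => ?_
      rw [mul_add]
      have i1 : y = Function.update z i (z i + 1) ↔ z = Function.update y i (y i - 1) :=
        update_shift_iff z y i 1
      have i2 : y = Function.update z i (z i - 1) ↔ z = Function.update y i (y i + 1) := by
        have hmain := update_shift_iff z y i (-1)
        constructor
        · intro h
          rw [show z i - 1 = z i + (-1) by ring] at h
          rw [hmain.mp h]
          congr 1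
          ring
        · intro h
          rw [show z i - 1 = z i + (-1) by ring]
          apply hmain.mpr
          rw [h]
          congr 1
          ring
      congr 1
      · by_cases h : y = Function.update z i (z i + 1)
        · rw [if_pos h, if_pos (i1.mp h), mul_one]
        · rw [if_neg h, if_neg (fun hh => h (i1.mpr hh)), mul_zero]
      · by_cases h : y = Function.update z i (z i - 1)
        · rw [if_pos h, if_pos (i2.mp h), mul_one]
        · rw [if_neg h, if_neg (fun hh => h (i2.mpr hh)), mul_zero]
  rw [Finset.sum_congr rfl fun z _ => expand z]
  rw [Finset.sum_add_distrib]
  congr 1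
  · simp
  · simp only [div_eq_mul_inv, ← Finset.sum_mul]
    congr 1
    rw [Finset.sum_comm]
    refine Finset.sum_congr rfl fun i _ => ?_
    rw [Finset.sum_add_distrib]
    congr 1 <;> simp




/-- circular distance to 0 on `ZMod n` -/
def dzF (n : ℕ) (z : ZMod n) : ℕ := min z.val (n - z.val)

lemma dz_natCast (m : ℕ) : dzF n ((m : ℕ) : ZMod n) = min (m % n) (n - m % n) := by
  unfold dzF
  rw [ZMod.val_natCast]

lemma dz_le_half (z : ZMod n) : dzF n z ≤ n / 2 := by
  have hv := ZMod.val_lt z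
  unfold dzF
  rcases le_total z.val (n - z.val) with h | h
  · rw [min_eq_left h]; omega
  · rw [min_eq_right h]; omega

lemma dz_cast_of_le_half (k : ℕ) (hk : k ≤ n / 2) : dzF n ((k : ℕ) : ZMod n) = k := by
  have hn : 0 < n := Nat.pos_of_ne_zero (NeZero.ne n)
  rw [dz_natCast]
  have hlt : k < n := by omega
  rw [Nat.mod_eq_of_lt hlt, min_eq_left (by omega)]

lemma dz_eq_zero {z : ZMod n} (h : dzF n z = 0) : z = 0 := by
  have hv := ZMod.val_lt z
  unfold dzF at h
  have : z.val = 0 := by omega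
  exact (ZMod.val_eq_zero z).mp this

lemma cast_val_eq (z : ZMod n) : ((z.val : ℕ) : ZMod n) = z := ZMod.natCast_val z |>.trans (ZMod.cast_id' ▸ rfl)

lemma neg_cast_eq (z : ZMod n) : -z = ((n - z.val : ℕ) : ZMod n) := by
  have hv := (ZMod.val_lt z).le
  rw [Nat.cast_sub hv, ZMod.natCast_self, zero_sub, cast_val_eq]

lemma dz_neg (z : ZMod n) : dzF n (-z) = dzF n z := by
  by_cases hz : z = 0
  · subst hz; simp
  · have hv := ZMod.val_lt z
    have hv0 : z.val ≠ 0 := fun h => hz ((ZMod.val_eq_zero z).mp h)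
    rw [neg_cast_eq, dz_natCast]
    have : (n - z.val) % n = n - z.val := Nat.mod_eq_of_lt (by omega)
    rw [this]
    unfold dzF
    have : n - (n - z.val) = z.val := by omega
    rw [this, min_comm]

lemma zmod_repr (z : ZMod n) :
    z = ((dzF n z : ℕ) : ZMod n) ∨ z = -((dzF n z : ℕ) : ZMod n) := by
  have hv := (ZMod.val_lt z).le
  unfold dzF
  rcases le_total z.val (n - z.val) with h | h
  · left
    rw [min_eq_left h, cast_val_eq]
  · right
    rw [min_eq_right h, ← neg_cast_eq, neg_neg]

lemma dz_sub_one_le (k : ℕ) (hk : k ≤ n / 2) : dzF n ((k : ZMod n) - 1) ≤ k + 1 := by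
  match k with
  | 0 =>
    have hn : 0 < n := Nat.pos_of_ne_zero (NeZero.ne n)
    have : ((0 : ℕ) : ZMod n) - 1 = ((n - 1 : ℕ) : ZMod n) := by
      rw [Nat.cast_sub hn, ZMod.natCast_self, Nat.cast_zero, Nat.cast_one, zero_sub]
    rw [this, dz_natCast]
    rcases Nat.lt_or_ge n 2 with h2 | h2
    · interval_cases n
      · simp
    · rw [Nat.mod_eq_of_lt (by omega)]
      omega
  | k + 1 =>
    have : ((k + 1 : ℕ) : ZMod n) - 1 = ((k : ℕ) : ZMod n) := by push_cast; ring
    rw [this, dz_cast_of_le_half k (by omega)]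
    omega

lemma dz_add_two_ge (k : ℕ) (hk : k + 1 ≤ n / 2) : k ≤ dzF n ((k : ZMod n) + 2) := by
  have hn : 0 < n := Nat.pos_of_ne_zero (NeZero.ne n)
  have hcast : ((k : ℕ) : ZMod n) + 2 = ((k + 2 : ℕ) : ZMod n) := by push_cast; ring
  rw [hcast, dz_natCast]
  rcases Nat.lt_or_ge (k + 2) n with h | h
  · rw [Nat.mod_eq_of_lt h]
    omega
  · -- then 2k+2 ≤ n ≤ k+2 gives k = 0
    have : k = 0 := by omega
    omega

/-- coordinatewise symmetric-unimodal functions on the torus -/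
def CU (n d : ℕ) (g : (Fin d → ZMod n) → ℝ≥0∞) : Prop :=
  ∀ (i : Fin d) (x : Fin d → ZMod n) (z z' : ZMod n), dzF n z ≤ dzF n z' →
    g (Function.update x i z') ≤ g (Function.update x i z)

/-- the 1-d lazy smoothing preserves symmetric unimodality -/
lemma core1 (u : ZMod n → ℝ≥0∞) (hu : ∀ z z', dzF n z ≤ dzF n z' → u z' ≤ u z) (w : ℝ≥0∞) :
    ∀ z z', dzF n z ≤ dzF n z' →
      u z' * (w + w) + (u (z' - 1) + u (z' + 1)) * w ≤
        u z * (w + w) + (u (z - 1) + u (z + 1)) * w := by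
  set v : ZMod n → ℝ≥0∞ := fun z => u z * (w + w) + (u (z - 1) + u (z + 1)) * w with hv
  have u_symm : ∀ z, u (-z) = u z := fun z =>
    le_antisymm (hu z (-z) (dz_neg z).ge) (hu (-z) z (dz_neg z).le)
  have v_symm : ∀ z, v (-z) = v z := by
    intro z
    show u (-z) * (w + w) + (u (-z - 1) + u (-z + 1)) * w = _
    rw [show -z - 1 = -(z + 1) by ring, show -z + 1 = -(z - 1) by ring,
      u_symm, u_symm, u_symm, add_comm (u (z + 1)) (u (z - 1))]
  have consecutive : ∀ k : ℕ, k + 1 ≤ n / 2 →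
      v (((k + 1 : ℕ) : ZMod n)) ≤ v ((k : ℕ) : ZMod n) := by
    intro k hk
    have e1 : ((k + 1 : ℕ) : ZMod n) - 1 = ((k : ℕ) : ZMod n) := by push_cast; ring
    have e2 : ((k + 1 : ℕ) : ZMod n) + 1 = ((k : ℕ) : ZMod n) + 2 := by push_cast; ring
    have e3 : ((k : ℕ) : ZMod n) + 1 = ((k + 1 : ℕ) : ZMod n) := by push_cast; ring
    have h1 : u ((k + 1 : ℕ) : ZMod n) ≤ u ((k : ℕ) : ZMod n) := by
      apply hu
      rw [dz_cast_of_le_half k (by omega), dz_cast_of_le_half (k + 1) hk]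
      omega
    have h2 : u (((k : ℕ) : ZMod n) + 2) ≤ u ((k : ℕ) : ZMod n) := by
      apply hu
      rw [dz_cast_of_le_half k (by omega)]
      exact dz_add_two_ge k hk
    have h3 : u ((k + 1 : ℕ) : ZMod n) ≤ u (((k : ℕ) : ZMod n) - 1) := by
      apply hu
      rw [dz_cast_of_le_half (k + 1) hk]
      exact dz_sub_one_le k (by omega)
    show u ((k+1:ℕ) : ZMod n) * (w + w) + (u (((k+1:ℕ) : ZMod n) - 1) + u (((k+1:ℕ) : ZMod n) + 1)) * w ≤
      u ((k:ℕ) : ZMod n) * (w + w) + (u (((k:ℕ) : ZMod n) - 1) + u (((k:ℕ) : ZMod n) + 1)) * w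
    rw [e1, e2, e3]
    set A := u ((k : ℕ) : ZMod n)
    set B := u ((k + 1 : ℕ) : ZMod n)
    set C := u (((k : ℕ) : ZMod n) + 2)
    set D := u (((k : ℕ) : ZMod n) - 1)
    -- B*(w+w) + (A+C)*w ≤ A*(w+w) + (D+B)*w
    have eL : B * (w + w) + (A + C) * w = (B * w + C * w) + (A * w + B * w) := by ring
    have eR : A * (w + w) + (D + B) * w = (D * w + A * w) + (A * w + B * w) := by ring
    rw [eL, eR]
    exact add_le_add (add_le_add (mul_le_mul_left h3 w) (mul_le_mul_left h2 w)) le_rfl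
  have chain : ∀ k k' : ℕ, k ≤ k' → k' ≤ n / 2 →
      v ((k' : ℕ) : ZMod n) ≤ v ((k : ℕ) : ZMod n) := by
    intro k k' hkk'
    induction k' , hkk' using Nat.le_induction with
    | base => intro _; exact le_rfl
    | succ m hm ih =>
      intro hm1
      exact le_trans (consecutive m hm1) (ih (by omega))
  intro z z' h
  have hz : v z = v ((dzF n z : ℕ) : ZMod n) := by
    rcases zmod_repr z with hr | hr
    · rw [← hr]
    · conv_lhs => rw [hr]
      rw [v_symm]
  have hz' : v z' = v ((dzF n z' : ℕ) : ZMod n) := by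
    rcases zmod_repr z' with hr | hr
    · rw [← hr]
    · conv_lhs => rw [hr]
      rw [v_symm]
  show v z' ≤ v z
  rw [hz, hz']
  exact chain (dzF n z) (dzF n z') h (dz_le_half z')


lemma two_d_div (hd : d ≠ 0) : (2 * d : ℝ≥0∞) / (4 * d) = 1 / 2 := by
  have hd2 : (2 * (d:ℝ≥0∞)) ≠ 0 := by simp [hd]
  have hdt : (2 * (d:ℝ≥0∞)) ≠ ⊤ := by simp [ENNReal.mul_ne_top]
  have h4 : (4 * (d:ℝ≥0∞)) = (2 * d) * 2 := by ring
  rw [h4]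
  have h := ENNReal.mul_div_mul_left (a := 1) (b := 2) (c := 2 * (d:ℝ≥0∞)) hd2 hdt
  rw [mul_one] at h
  exact h

lemma conv_lazyP' (hd : d ≠ 0) (g : (Fin d → ZMod n) → ℝ≥0∞) (y : Fin d → ZMod n) :
    ∑ z, g z * lazyP n d z y =
      ∑ i, (g y * ((4 * d : ℝ≥0∞)⁻¹ + (4 * d : ℝ≥0∞)⁻¹) +
        (g (Function.update y i (y i - 1)) + g (Function.update y i (y i + 1))) *
          (4 * d : ℝ≥0∞)⁻¹) := by
  rw [conv_lazyP]
  have hsplit : ∑ i : Fin d, (g y * ((4 * d : ℝ≥0∞)⁻¹ + (4 * d : ℝ≥0∞)⁻¹) +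
        (g (Function.update y i (y i - 1)) + g (Function.update y i (y i + 1))) *
          (4 * d : ℝ≥0∞)⁻¹)
      = (∑ _i : Fin d, g y * ((4 * d : ℝ≥0∞)⁻¹ + (4 * d : ℝ≥0∞)⁻¹)) +
        ∑ i : Fin d, (g (Function.update y i (y i - 1)) + g (Function.update y i (y i + 1))) *
          (4 * d : ℝ≥0∞)⁻¹ := Finset.sum_add_distrib
  rw [hsplit]
  congr 1
  · rw [Finset.sum_const, Finset.card_univ, Fintype.card_fin, nsmul_eq_mul]
    have hw : (d : ℝ≥0∞) * ((4 * d : ℝ≥0∞)⁻¹ + (4 * d : ℝ≥0∞)⁻¹) = 2⁻¹ := by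
      have h : (d : ℝ≥0∞) * ((4 * d : ℝ≥0∞)⁻¹ + (4 * d : ℝ≥0∞)⁻¹)
          = (2 * d) * (4 * d : ℝ≥0∞)⁻¹ := by ring
      rw [h, ← div_eq_mul_inv, two_d_div hd, one_div]
    symm
    calc (d : ℝ≥0∞) * (g y * ((4 * d : ℝ≥0∞)⁻¹ + (4 * d : ℝ≥0∞)⁻¹))
        = g y * ((d : ℝ≥0∞) * ((4 * d : ℝ≥0∞)⁻¹ + (4 * d : ℝ≥0∞)⁻¹)) := by ring
      _ = g y / 2 := by rw [hw, div_eq_mul_inv]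
  · rw [div_eq_mul_inv, Finset.sum_mul]

lemma cu_delta : CU n d (fun y => if y = (0 : Fin d → ZMod n) then 1 else 0) := by
  intro i x z z' h
  by_cases hz' : Function.update x i z' = 0
  · have hz'0 : z' = 0 := by
      have := congrFun hz' i
      simpa using this
    subst hz'0
    have hz0 : z = 0 := by
      apply dz_eq_zero (n := n)
      have h0 : dzF n (0 : ZMod n) = 0 := by
        unfold dzF
        simp
      omega
    subst hz0
    exact le_rfl
  · simp only [if_neg hz']
    exact zero_le

lemma cu_step (hd : d ≠ 0) (g : (Fin d → ZMod n) → ℝ≥0∞) (hg : CU n d g) :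
    CU n d (fun y => ∑ z, g z * lazyP n d z y) := by
  intro i x z z' hzz'
  simp only
  rw [conv_lazyP' hd g _, conv_lazyP' hd g _]
  apply Finset.sum_le_sum
  intro j _
  set w := (4 * d : ℝ≥0∞)⁻¹ with hwdef
  by_cases hj : j = i
  · subst hj
    have e1 : ∀ c : ZMod n, Function.update x j c j = c := fun c => by simp
    have e2 : ∀ c v : ZMod n,
        Function.update (Function.update x j c) j v = Function.update x j v := fun c v => by
      simp
    rw [e1, e1, e2, e2, e2, e2]
    exact core1 (fun c => g (Function.update x j c)) (fun c c' h => hg j x c c' h) w z z' hzz'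
  · have e0 : Function.update x i z' j = x j := by simp [Function.update, hj]
    have e0' : Function.update x i z j = x j := by simp [Function.update, hj]
    rw [e0, e0']
    have ec : ∀ (c v : ZMod n), Function.update (Function.update x i c) j v
        = Function.update (Function.update x j v) i c := fun c v => by
      funext m
      by_cases hm : m = j
      · subst hm; simp [Function.update, hj, Ne.symm hj]
      · by_cases hm' : m = i
        · subst hm'; simp [Function.update, hj, hm]
        · simp [Function.update, hm, hm']
    rw [ec z' (x j - 1), ec z' (x j + 1), ec z (x j - 1), ec z (x j + 1)]
    exact add_le_add (mul_le_mul_left (hg i x z z' hzz') _)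
      (mul_le_mul_left (add_le_add (hg i _ z z' hzz') (hg i _ z z' hzz')) w)

lemma cu_compare (g : (Fin d → ZMod n) → ℝ≥0∞) (hg : CU n d g)
    (x y : Fin d → ZMod n) (h : ∀ i, dzF n (y i) ≤ dzF n (x i)) : g x ≤ g y := by
  classical
  have claim : ∀ s : Finset (Fin d), g (fun i => if i ∈ s then x i else y i) ≤ g y := by
    intro s
    induction s using Finset.induction with
    | empty => simp
    | @insert a s ha ih =>
      have e1 : (fun i => if i ∈ insert a s then x i else y i)
          = Function.update (fun i => if i ∈ s then x i else y i) a (x a) := by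
        funext i
        by_cases hi : i = a
        · subst hi; simp [Function.update, ha]
        · simp [Function.update, hi, Finset.mem_insert]
      have e2 : (fun i => if i ∈ s then x i else y i)
          = Function.update (fun i => if i ∈ s then x i else y i) a (y a) := by
        funext i
        by_cases hi : i = a
        · subst hi; simp [Function.update, ha]
        · simp [Function.update, hi]
      rw [e1]
      calc g (Function.update (fun i => if i ∈ s then x i else y i) a (x a))
          ≤ g (Function.update (fun i => if i ∈ s then x i else y i) a (y a)) :=
            hg a _ (y a) (x a) (h a)
        _ = g (fun i => if i ∈ s then x i else y i) := by rw [← e2]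
        _ ≤ g y := ih
  have := claim Finset.univ
  simpa using this

lemma cu_hk (hd : d ≠ 0) (t : ℕ) : CU n d (fun y => hk (lazyP n d) t 0 y) := by
  induction t with
  | zero => exact cu_delta
  | succ t ih => exact cu_step hd _ ih

lemma hk_translate (t : ℕ) (x y c : Fin d → ZMod n) :
    hk (lazyP n d) t (x + c) (y + c) = hk (lazyP n d) t x y := by
  induction t generalizing y with
  | zero =>
    show (if y + c = x + c then (1:ℝ≥0∞) else 0) = (if y = x then 1 else 0)
    have : (y + c = x + c) ↔ (y = x) := by
      constructor
      · intro h; funext j; have := congrFun h j; simpa using this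
      · rintro rfl; rfl
    rw [if_congr this rfl rfl]
  | succ t ih =>
    show ∑ z, hk (lazyP n d) t (x + c) z * lazyP n d z (y + c)
        = ∑ z, hk (lazyP n d) t x z * lazyP n d z y
    have key := Fintype.sum_equiv (Equiv.addRight c)
      (fun z => hk (lazyP n d) t x z * lazyP n d z y)
      (fun z => hk (lazyP n d) t (x + c) z * lazyP n d z (y + c))
      (fun z => by
        show hk (lazyP n d) t x z * lazyP n d z y
            = hk (lazyP n d) t (x + c) (z + c) * lazyP n d (z + c) (y + c)
        rw [ih, lazyP_translate])
    exact key.symm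

lemma hk_shift (t : ℕ) (x y : Fin d → ZMod n) :
    hk (lazyP n d) t x y = hk (lazyP n d) t 0 (y - x) := by
  have := hk_translate (n := n) (d := d) t 0 (y - x) x
  rw [zero_add, sub_add_cancel] at this
  exact this

/-- diagonal maximum and antipodal minimum of the heat kernel -/
lemma hk_le_diag (hd : d ≠ 0) (t : ℕ) (x y : Fin d → ZMod n) :
    hk (lazyP n d) t x y ≤ hk (lazyP n d) t 0 0 := by
  rw [hk_shift]
  refine cu_compare _ (cu_hk hd t) (y - x) 0 fun i => ?_
  show dzF n (0 : ZMod n) ≤ _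
  unfold dzF
  simp

lemma hk_anti_le (hd : d ≠ 0) (t : ℕ) (y : Fin d → ZMod n) :
    hk (lazyP n d) t 0 (fun _ => ((n / 2 : ℕ) : ZMod n)) ≤ hk (lazyP n d) t 0 y := by
  refine cu_compare _ (cu_hk hd t) (fun _ => ((n / 2 : ℕ) : ZMod n)) y fun i => ?_
  rw [dz_cast_of_le_half (n / 2) le_rfl]
  exact dz_le_half (y i)

/-! ### Renewal machinery on the torus -/

variable (n d) in
/-- return probability sequence -/
noncomputable def q (t : ℕ) : ℝ≥0∞ := hk (lazyP n d) t 0 0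

variable (n d) in
/-- survival probability of the constant target `0` -/
noncomputable def hseq (t : ℕ) : ℝ≥0∞ := S (lazyP n d) 0 (fun _ => 0) t

lemma q_zero : q n d 0 = 1 := by
  show (if (0 : Fin d → ZMod n) = 0 then (1:ℝ≥0∞) else 0) = 1
  simp

lemma hseq_zero : hseq n d 0 = 1 := S_zero _ _ _

lemma hseq_succ (hd : d ≠ 0) (t : ℕ) :
    hseq n d t = hseq n d (t + 1) + FH (lazyP n d) 0 (fun _ => 0) (t + 1) :=
  S_succ _ (fun x => lazyP_stochastic hd x) _ _ t

lemma stay_self_zero (g : ℕ → Fin d → ZMod n) (t : ℕ) :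
    stayProb (lazyP n d) 0 (fun s => {g s}ᶜ) (t + 1) (g (t + 1)) = 0 := by
  simp [stayProb]

lemma renewal (t : ℕ) :
    q n d (t + 1) = ∑ r ∈ Finset.range (t + 1),
      FH (lazyP n d) 0 (fun _ => (0 : Fin d → ZMod n)) (r + 1) * q n d (t - r) := by
  have hdec := decomp (lazyP n d) 0 (fun _ => (0 : Fin d → ZMod n)) (t + 1) 0
  have h0 : stayProb (lazyP n d) 0
      (fun s => ({(0 : Fin d → ZMod n)}ᶜ : Finset (Fin d → ZMod n))) (t + 1) 0 = 0 :=
    stay_self_zero (fun _ => 0) t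
  rw [h0, zero_add] at hdec
  rw [show (q n d (t+1) : ℝ≥0∞) = hk (lazyP n d) (t+1) 0 0 from rfl, hdec]
  refine Finset.sum_congr rfl fun r hr => ?_
  congr 1

lemma qh_conv (hd : d ≠ 0) : ∀ t : ℕ,
    ∑ m ∈ Finset.range (t + 1), q n d m * hseq n d (t - m) = 1 := by
  intro t
  induction t with
  | zero => simp [q_zero, hseq_zero]
  | succ t ih =>
    have e : ∀ m ∈ Finset.range (t + 1), q n d m * hseq n d (t - m)
        = q n d m * hseq n d (t + 1 - m) +
          q n d m * FH (lazyP n d) 0 (fun _ => (0 : Fin d → ZMod n)) (t + 1 - m) := by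
      intro m hm
      have hm' : m ≤ t := by
        have := Finset.mem_range.mp hm
        omega
      have h1 : t - m + 1 = t + 1 - m := by omega
      rw [← mul_add, ← h1, ← hseq_succ hd (t - m)]
    have ihsplit : (∑ m ∈ Finset.range (t + 1), q n d m * hseq n d (t + 1 - m)) +
        ∑ m ∈ Finset.range (t + 1),
          q n d m * FH (lazyP n d) 0 (fun _ => (0 : Fin d → ZMod n)) (t + 1 - m) = 1 := by
      rw [← Finset.sum_add_distrib, ← Finset.sum_congr rfl e]
      exact ih
    have hR : ∑ m ∈ Finset.range (t + 1),
        q n d m * FH (lazyP n d) 0 (fun _ => (0 : Fin d → ZMod n)) (t + 1 - m)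
        = q n d (t + 1) := by
      rw [renewal t]
      rw [← Finset.sum_range_reflect]
      refine Finset.sum_congr rfl fun m hm => ?_
      have hm' : m ≤ t := by
        have := Finset.mem_range.mp hm
        omega
      have h4 : t + 1 - (t - m) = m + 1 := by omega
      rw [show t + 1 - 1 - m = t - m by omega, h4, mul_comm]
    rw [Finset.sum_range_succ]
    have hlast : q n d (t + 1) * hseq n d (t + 1 - (t + 1)) = q n d (t + 1) := by
      have : t + 1 - (t + 1) = 0 := by omega
      rw [this, hseq_zero, mul_one]
    rw [hlast, ← hR]
    exact ihsplit

/-- key pointwise inequality transferred through the first-passage decomposition -/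
lemma keyA (hd : d ≠ 0) (f : ℕ → Fin d → ZMod n) (t : ℕ) :
    ∑ r ∈ Finset.range (t + 1),
        FH (lazyP n d) 0 (fun _ => (fun _ => ((n / 2 : ℕ) : ZMod n) : Fin d → ZMod n)) (r + 1) *
          q n d (t - r) ≤
      ∑ r ∈ Finset.range (t + 1), FH (lazyP n d) 0 f (r + 1) * q n d (t - r) := by
  set aa : Fin d → ZMod n := fun _ => ((n / 2 : ℕ) : ZMod n) with haa
  have hdecA := decomp (lazyP n d) 0 (fun _ => aa) (t + 1) aa
  rw [stay_self_zero (fun _ => aa) t, zero_add] at hdecA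
  have hLHS : ∑ r ∈ Finset.range (t + 1),
      FH (lazyP n d) 0 (fun _ => aa) (r + 1) * q n d (t - r) = hk (lazyP n d) (t + 1) 0 aa := by
    rw [hdecA]
    refine Finset.sum_congr rfl fun r hr => ?_
    congr 1
    show q n d (t - r) = hk (lazyP n d) (t + 1 - 1 - r) aa aa
    rw [hk_shift, sub_self]
    rfl
  have hdecF := decomp (lazyP n d) 0 f (t + 1) (f (t + 1))
  rw [stay_self_zero f t, zero_add] at hdecF
  have hRHS : hk (lazyP n d) (t + 1) 0 (f (t + 1)) ≤
      ∑ r ∈ Finset.range (t + 1), FH (lazyP n d) 0 f (r + 1) * q n d (t - r) := by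
    rw [hdecF]
    refine Finset.sum_le_sum fun r hr => ?_
    refine mul_le_mul_right ?_ _
    show hk (lazyP n d) (t + 1 - 1 - r) (f (r + 1)) (f (t + 1)) ≤ q n d (t - r)
    have h := hk_le_diag hd (t + 1 - 1 - r) (f (r + 1)) (f (t + 1))
    exact h
  calc ∑ r ∈ Finset.range (t + 1), FH (lazyP n d) 0 (fun _ => aa) (r + 1) * q n d (t - r)
      = hk (lazyP n d) (t + 1) 0 aa := hLHS
    _ ≤ hk (lazyP n d) (t + 1) 0 (f (t + 1)) := hk_anti_le hd (t + 1) (f (t + 1))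
    _ ≤ _ := hRHS

/-- triangle reindexing -/
lemma triangle (X : ℕ → ℕ → ℝ≥0∞) : ∀ T : ℕ,
    ∑ r ∈ Finset.range T, ∑ m ∈ Finset.range (T - r), X r m =
      ∑ s ∈ Finset.range T, ∑ r ∈ Finset.range (s + 1), X r (s - r) := by
  intro T
  induction T with
  | zero => simp
  | succ T ih =>
    have eL : ∀ r ∈ Finset.range (T + 1), ∑ m ∈ Finset.range (T + 1 - r), X r m
        = ∑ m ∈ Finset.range (T - r), X r m + X r (T - r) := by
      intro r hr
      have hr' : r ≤ T := by
        have := Finset.mem_range.mp hr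
        omega
      have h1 : T + 1 - r = (T - r) + 1 := by omega
      rw [h1, Finset.sum_range_succ]
    rw [Finset.sum_congr rfl eL, Finset.sum_add_distrib]
    rw [Finset.sum_range_succ (fun r => ∑ m ∈ Finset.range (T - r), X r m)]
    have hz : ∑ m ∈ Finset.range (T - T), X T m = 0 := by simp
    rw [hz, add_zero, ih]
    rw [Finset.sum_range_succ (fun s => ∑ r ∈ Finset.range (s + 1), X r (s - r))]

/-- cumulative hitting probability written as a convolution with `hseq` -/
lemma hit_eq (hd : d ≠ 0) (g : ℕ → Fin d → ZMod n) (T : ℕ) :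
    ∑ r ∈ Finset.range T, FH (lazyP n d) 0 g (r + 1) =
      ∑ s ∈ Finset.range T,
        (∑ r ∈ Finset.range (s + 1), FH (lazyP n d) 0 g (r + 1) * q n d (s - r)) *
          hseq n d (T - 1 - s) := by
  calc ∑ r ∈ Finset.range T, FH (lazyP n d) 0 g (r + 1)
      = ∑ r ∈ Finset.range T, ∑ m ∈ Finset.range (T - r),
          FH (lazyP n d) 0 g (r + 1) * (q n d m * hseq n d (T - 1 - r - m)) := by
        refine Finset.sum_congr rfl fun r hr => ?_
        have hr' : r < T := Finset.mem_range.mp hr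
        have h1 : T - r = (T - 1 - r) + 1 := by omega
        rw [← Finset.mul_sum]
        rw [h1, qh_conv hd (T - 1 - r), mul_one]
    _ = ∑ s ∈ Finset.range T, ∑ r ∈ Finset.range (s + 1),
          FH (lazyP n d) 0 g (r + 1) * (q n d (s - r) * hseq n d (T - 1 - r - (s - r))) :=
        triangle _ T
    _ = ∑ s ∈ Finset.range T,
          (∑ r ∈ Finset.range (s + 1), FH (lazyP n d) 0 g (r + 1) * q n d (s - r)) *
            hseq n d (T - 1 - s) := by
        refine Finset.sum_congr rfl fun s hs => ?_
        rw [Finset.sum_mul]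
        refine Finset.sum_congr rfl fun r hr => ?_
        have hr' : r ≤ s := by
          have := Finset.mem_range.mp hr
          omega
        have h1 : T - 1 - r - (s - r) = T - 1 - s := by omega
        rw [h1, mul_assoc]

/-- the main comparison of cumulative hitting probabilities -/
lemma hit_le (hd : d ≠ 0) (f : ℕ → Fin d → ZMod n) (T : ℕ) :
    ∑ r ∈ Finset.range T,
        FH (lazyP n d) 0 (fun _ => (fun _ => ((n / 2 : ℕ) : ZMod n) : Fin d → ZMod n)) (r + 1) ≤
      ∑ r ∈ Finset.range T, FH (lazyP n d) 0 f (r + 1) := by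
  rw [hit_eq hd, hit_eq hd]
  refine Finset.sum_le_sum fun s hs => ?_
  exact mul_le_mul_left (keyA hd f s) _

end Stmt7

/-- For the lazy simple random walk on `ℤ_n^d` started at `0`, the stationary target at
the antipodal point `a = (⌊n/2⌋, …, ⌊n/2⌋)` is hardest to hit among all moving targets:
`P(X_1 ≠ f(1), …, X_t ≠ f(t)) ≤ P(X_1 ≠ a, …, X_t ≠ a)`. -/
theorem stmt7 (n d : ℕ) [NeZero n] (f : ℕ → Fin d → ZMod n) (t : ℕ) (ht : 1 ≤ t) :
    ∑ y, stayProb (lazyP n d) 0 (fun s => {f s}ᶜ) t y ≤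
      ∑ y, stayProb (lazyP n d) 0
        (fun _ => ({fun _ => ((n / 2 : ℕ) : ZMod n)} : Finset (Fin d → ZMod n))ᶜ) t y := by
  by_cases hd : d = 0
  · subst hd
    haveI : Subsingleton (Fin 0 → ZMod n) := ⟨fun a b => funext fun i => i.elim0⟩
    have hfun : (fun s => ({f s}ᶜ : Finset (Fin 0 → ZMod n))) =
        (fun _ => ({fun _ => ((n / 2 : ℕ) : ZMod n)} : Finset (Fin 0 → ZMod n))ᶜ) := by
      funext s
      rw [Subsingleton.elim (f s) (fun _ => ((n / 2 : ℕ) : ZMod n))]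
    rw [hfun]
  · have hsplitF := Stmt7.S_split (lazyP n d) (fun x => Stmt7.lazyP_stochastic hd x) 0 f t
    have hsplitA := Stmt7.S_split (lazyP n d) (fun x => Stmt7.lazyP_stochastic hd x) 0
      (fun _ => (fun _ => ((n / 2 : ℕ) : ZMod n) : Fin d → ZMod n)) t
    have hhit := Stmt7.hit_le hd f t
    have hle1 : (∑ r ∈ Finset.range t, Stmt7.FH (lazyP n d) 0 f (r + 1)) ≤ 1 := by
      rw [← hsplitF]
      exact le_add_self
    have hne : (∑ r ∈ Finset.range t, Stmt7.FH (lazyP n d) 0 f (r + 1)) ≠ ⊤ :=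
      ne_top_of_le_ne_top ENNReal.one_ne_top hle1
    have hmain : Stmt7.S (lazyP n d) 0 f t +
          (∑ r ∈ Finset.range t, Stmt7.FH (lazyP n d) 0 f (r + 1)) ≤
        Stmt7.S (lazyP n d) 0 (fun _ => (fun _ => ((n / 2 : ℕ) : ZMod n) : Fin d → ZMod n)) t +
          (∑ r ∈ Finset.range t, Stmt7.FH (lazyP n d) 0 f (r + 1)) := by
      calc Stmt7.S (lazyP n d) 0 f t +
            (∑ r ∈ Finset.range t, Stmt7.FH (lazyP n d) 0 f (r + 1)) = 1 := hsplitF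
        _ = Stmt7.S (lazyP n d) 0 (fun _ => (fun _ => ((n / 2 : ℕ) : ZMod n) : Fin d → ZMod n)) t +
            ∑ r ∈ Finset.range t, Stmt7.FH (lazyP n d) 0
              (fun _ => (fun _ => ((n / 2 : ℕ) : ZMod n) : Fin d → ZMod n)) (r + 1) :=
            hsplitA.symm
        _ ≤ _ := add_le_add_right hhit _
    exact (ENNReal.add_le_add_iff_right hne).mp hmain
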